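/- Let T = {(0,0)} ∪ {(z,w) ∈ ℂ² : z·w = 1} and let X = ℂ² \ T, with f : X → ℂ the restriction to X of the projection of ℂ² onto its first factor. Then f is not topologically locally trivial over ℂ at 0: there do not exist an open set U ⊆ ℂ with 0 ∈ U and a homeomorphism h : f⁻¹(U) → U × (ℂ \ {0}) such that the composition of h with the projection onto the first factor equals the restriction of f to f⁻¹(U). -/

import Mathlib

/-- The set `T = {(0,0)} ∪ {(z,w) : z·w = 1}` in `ℂ²`. -/
def ExampleT : Set (ℂ × ℂ) := {(0, 0)} ∪ {p : ℂ × ℂ | p.1 * p.2 = 1}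

/-- The open complex manifold `X = ℂ² \ T`. -/
def ExampleX : Set (ℂ × ℂ) := ExampleTᶜ

/-- The first-coordinate projection `f : X → ℂ`. -/
def exampleF (p : ExampleX) : ℂ := (p : ℂ × ℂ).1

open Complex unitInterval

noncomputable section

lemma lift_transfer (α β : unitInterval → ℂ) (hαc : Continuous α) (hβc : Continuous β)
    (hα : ∀ t, α t ≠ 0) (hβ : ∀ t, β t ≠ 0)
    (hclose : ∀ t, ‖β t - α t‖ < ‖α t‖)
    (hend : α 1 = α 0 ∧ β 1 = β 0)
    (ℓ : unitInterval → ℂ) (hc : Continuous ℓ) (hexp : ∀ t, Complex.exp (ℓ t) = α t) :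
    ∃ ℓ' : unitInterval → ℂ, Continuous ℓ' ∧ (∀ t, Complex.exp (ℓ' t) = β t) ∧
      ℓ' 1 - ℓ' 0 = ℓ 1 - ℓ 0 := by
  set g : unitInterval → ℂ := fun t => β t / α t with hg
  have hgne : ∀ t, g t ≠ 0 := fun t => div_ne_zero (hβ t) (hα t)
  have hslit : ∀ t, g t ∈ Complex.slitPlane := by
    intro t
    have h1 : ‖g t - 1‖ < 1 := by
      have he : g t - 1 = (β t - α t) / α t := by
        rw [div_sub_one (hα t)]
      rw [he, norm_div, div_lt_one (norm_pos_iff.mpr (hα t))]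
      exact hclose t
    left
    have h2 : |(g t - 1).re| < 1 :=
      lt_of_le_of_lt (Complex.abs_re_le_norm (g t - 1)) h1
    have h3 : (g t).re = 1 + (g t - 1).re := by simp
    rw [h3]
    nlinarith [abs_lt.mp h2]
  have hgc : Continuous g := hβc.div hαc hα
  refine ⟨fun t => ℓ t + Complex.log (g t), ?_, ?_, ?_⟩
  · refine hc.add (continuous_iff_continuousAt.mpr fun t => ?_)
    exact (continuousAt_clog (hslit t)).comp hgc.continuousAt
  · intro t
    rw [Complex.exp_add, hexp, Complex.exp_log (hgne t), hg]
    rw [mul_comm, div_mul_cancel₀ _ (hα t)]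
  · have hgeq : g 1 = g 0 := by rw [hg]; simp only [hend.1, hend.2]
    simp only [hgeq]; ring

end

noncomputable section

open Real

lemma no_winding (r : ℝ) (hr : 0 < r) (L : unitInterval × unitInterval → ℂ)
    (hL : Continuous L) (hne : ∀ p, L p ≠ 0)
    (hloop : ∀ s, L (0, s) = L (1, s))
    (hbase : ∀ t : unitInterval, L (t, 0)
      = (r : ℂ) * Complex.exp (2 * (Real.pi : ℂ) * ((t : ℝ) : ℂ) * Complex.I))
    (htop : ∀ t, L (t, 1) = L (0, 1)) : False := by
  -- minimum modulus
  obtain ⟨p₀, -, hmin'⟩ := IsCompact.exists_isMinOn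
    (isCompact_univ : IsCompact (Set.univ : Set (unitInterval × unitInterval)))
    ⟨(0, 0), Set.mem_univ _⟩ ((continuous_norm.comp hL).continuousOn)
  have hmin : ∀ q : unitInterval × unitInterval, ‖L p₀‖ ≤ ‖L q‖ := by
    intro q; exact hmin' (Set.mem_univ q)
  set m := ‖L p₀‖ with hm
  have hm0 : 0 < m := norm_pos_iff.mpr (hne p₀)
  -- uniform continuity
  obtain ⟨δ, hδ0, hδ⟩ := Metric.uniformContinuous_iff.mp
    (CompactSpace.uniformContinuous_of_continuous hL) m hm0
  set S : Set unitInterval := {s | ∃ ℓ : unitInterval → ℂ, Continuous ℓ ∧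
    (∀ t, Complex.exp (ℓ t) = L (t, s)) ∧ ℓ 1 - ℓ 0 = 2 * (Real.pi : ℂ) * Complex.I} with hS
  have key : ∀ s s' : unitInterval, dist s s' < δ → s ∈ S → s' ∈ S := by
    rintro s s' hd ⟨ℓ, hc, hexp, hdiff⟩
    have hdist : ∀ t : unitInterval, dist (L (t, s')) (L (t, s)) < m := by
      intro t
      apply hδ
      rw [Prod.dist_eq, dist_self, max_eq_right dist_nonneg, dist_comm]
      exact hd
    obtain ⟨ℓ', h1, h2, h3⟩ := lift_transfer (fun t => L (t, s)) (fun t => L (t, s'))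
      (hL.comp (continuous_id.prodMk continuous_const))
      (hL.comp (continuous_id.prodMk continuous_const))
      (fun t => hne _) (fun t => hne _)
      (fun t => lt_of_lt_of_le (by simpa [dist_eq_norm] using hdist t)
        (hmin (t, s)))
      ⟨(hloop s).symm, (hloop s').symm⟩ ℓ hc hexp
    exact ⟨ℓ', h1, h2, h3.trans hdiff⟩
  have h0S : (0 : unitInterval) ∈ S := by
    refine ⟨fun t => ((Real.log r : ℝ) : ℂ) + 2 * (Real.pi : ℂ) * ((t : ℝ) : ℂ) * Complex.I,
      ?_, ?_, ?_⟩
    · fun_prop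
    · intro t
      rw [Complex.exp_add, hbase, ← Complex.ofReal_exp, Real.exp_log hr]
    · simp
  have hclopen : IsClopen S := by
    constructor
    · rw [← isOpen_compl_iff]
      rw [Metric.isOpen_iff]
      intro s hs
      exact ⟨δ, hδ0, fun s' hs' hmem =>
        hs (key s' s (Metric.mem_ball.mp hs') hmem)⟩
    · rw [Metric.isOpen_iff]
      intro s hs
      exact ⟨δ, hδ0, fun s' hs' =>
        key s s' (by rw [dist_comm]; exact Metric.mem_ball.mp hs') hs⟩
  have h1S : (1 : unitInterval) ∈ S := by
    rw [hclopen.eq_univ ⟨0, h0S⟩]; trivial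
  obtain ⟨ℓ, hc, hexp, hdiff⟩ := h1S
  -- all values of ℓ differ from ℓ 0 by integer multiples of 2πi
  have hconst : ∀ t, ∃ n : ℤ, ℓ t = ℓ 0 + n * (2 * (Real.pi : ℂ) * Complex.I) := by
    intro t
    rw [← Complex.exp_eq_exp_iff_exists_int, hexp, hexp, htop]
  set v : unitInterval → ℝ := fun t => (ℓ t - ℓ 0).im / (2 * Real.pi) with hv
  have hvc : Continuous v :=
    (Complex.continuous_im.comp (hc.sub continuous_const)).div_const _
  have hv0 : v 0 = 0 := by simp [hv]
  have hv1 : v 1 = 1 := by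
    rw [hv]
    show (ℓ 1 - ℓ 0).im / (2 * Real.pi) = 1
    rw [div_eq_one_iff_eq (by positivity), hdiff]
    simp [Complex.mul_im, Complex.I_im, Complex.I_re]
  have hint : ∀ t : unitInterval, ∃ n : ℤ, v t = n := by
    intro t
    obtain ⟨n, hn⟩ := hconst t
    refine ⟨n, ?_⟩
    rw [hv]
    show (ℓ t - ℓ 0).im / (2 * Real.pi) = n
    rw [hn, add_sub_cancel_left]
    have him : ((n : ℂ) * (2 * (Real.pi : ℂ) * Complex.I)).im = n * (2 * Real.pi) := by
      simp [Complex.mul_im, Complex.I_im, Complex.I_re]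
    rw [him, mul_div_assoc, div_self (by positivity), mul_one]
  have hmem : (1/2 : ℝ) ∈ Set.Icc (v 0) (v 1) := by rw [hv0, hv1]; norm_num
  obtain ⟨t, ht⟩ := intermediate_value_univ (0 : unitInterval) 1 hvc hmem
  obtain ⟨n, hn⟩ := hint t
  rw [ht] at hn
  have h2 : (2 : ℝ) * n = 1 := by linarith
  have h3 : (2 * n : ℤ) = 1 := by exact_mod_cast h2
  omega

end



open Complex unitInterval

noncomputable section

lemma mem_exampleX_of (z w : ℂ) (hzw : ‖z‖ * ‖w‖ < 1)
    (hz : z = 0 → w ≠ 0) : (z, w) ∈ ExampleX := by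
  intro hmem
  rcases hmem with hm | hm
  · rw [Set.mem_singleton_iff, Prod.mk.injEq] at hm
    exact hz hm.1 hm.2
  · rw [Set.mem_setOf_eq] at hm
    simp only at hm
    rw [← norm_mul] at hzw
    rw [hm] at hzw
    simp at hzw

/-- The projection `f : X → ℂ` is not topologically locally trivial at `0`:
there is no open neighborhood `U` of `0` and homeomorphism
`f⁻¹(U) ≃ U × (ℂ \ {0})` commuting with the projection to `U`. -/
theorem not_locally_trivial_at_zero :
    ¬ ∃ (U : Set ℂ), IsOpen U ∧ (0 : ℂ) ∈ U ∧
      ∃ h : (exampleF ⁻¹' U) ≃ₜ (U × ({0}ᶜ : Set ℂ)),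
        ∀ p : exampleF ⁻¹' U, ((h p).1 : ℂ) = exampleF (p : ExampleX) := by
  rintro ⟨U, hUopen, hU0, h, hcomm⟩
  obtain ⟨ρ, hρ, hball⟩ := Metric.isOpen_iff.mp hUopen 0 hU0
  set rr : ℝ := 1 / (2 * ρ) with hrr
  have hrrpos : 0 < rr := by rw [hrr]; positivity
  -- the coordinates of the contracting family of loops
  set Z : unitInterval → ℂ := fun s => ((min (2 * (s : ℝ)) 1 : ℝ) : ℂ) * ((ρ / 2 : ℝ) : ℂ)
    with hZ
  set W : unitInterval × unitInterval → ℂ := fun p =>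
    ((min (2 - 2 * (p.2 : ℝ)) 1 : ℝ) : ℂ) * ((rr : ℝ) : ℂ) *
      Complex.exp (2 * (Real.pi : ℂ) * ((p.1 : ℝ) : ℂ) * Complex.I) with hW
  have hmin1 : ∀ s : unitInterval, 0 ≤ min (2 * (s : ℝ)) 1 ∧ min (2 * (s : ℝ)) 1 ≤ 1 :=
    fun s => ⟨le_min (by have := s.2.1; linarith) zero_le_one, min_le_right _ _⟩
  have hmin2 : ∀ s : unitInterval, 0 ≤ min (2 - 2 * (s : ℝ)) 1 ∧ min (2 - 2 * (s : ℝ)) 1 ≤ 1 :=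
    fun s => ⟨le_min (by have := s.2.2; linarith) zero_le_one, min_le_right _ _⟩
  have habsexp : ∀ t : unitInterval,
      ‖(Complex.exp (2 * (Real.pi : ℂ) * ((t : ℝ) : ℂ) * Complex.I))‖ = 1 := by
    intro t
    rw [Complex.norm_exp]
    have : (2 * (Real.pi : ℂ) * ((t : ℝ) : ℂ) * Complex.I).re = 0 := by simp
    rw [this, Real.exp_zero]
  have habsZ : ∀ s : unitInterval, ‖Z s‖ ≤ ρ / 2 := by
    intro s
    rw [hZ]
    simp only [norm_mul, Complex.norm_real, Real.norm_eq_abs]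
    rw [_root_.abs_of_nonneg (hmin1 s).1, _root_.abs_of_nonneg (by positivity : (0:ℝ) ≤ ρ/2)]
    nlinarith [(hmin1 s).1, (hmin1 s).2, hρ]
  have habsW : ∀ p : unitInterval × unitInterval, ‖W p‖ ≤ rr := by
    intro p
    rw [hW]
    simp only [norm_mul, Complex.norm_real, Real.norm_eq_abs, habsexp p.1]
    rw [_root_.abs_of_nonneg (hmin2 p.2).1, _root_.abs_of_nonneg (le_of_lt hrrpos), mul_one]
    nlinarith [(hmin2 p.2).1, (hmin2 p.2).2, hrrpos]
  have hXmem : ∀ p : unitInterval × unitInterval, (Z p.2, W p) ∈ ExampleX := by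
    intro p
    apply mem_exampleX_of
    · calc ‖Z p.2‖ * ‖W p‖ ≤ (ρ / 2) * rr := by
            apply mul_le_mul (habsZ p.2) (habsW p) (by positivity) (by positivity)
          _ < 1 := by rw [hrr]; rw [div_mul_div_comm]; rw [div_lt_one (by positivity)]; nlinarith
    · intro hz0
      rw [hZ] at hz0
      simp only [mul_eq_zero, Complex.ofReal_eq_zero] at hz0
      have hz0' : min (2 * ((p.2 : ℝ))) 1 = 0 := by
        rcases hz0 with h1 | h1
        · exact h1
        · exfalso; linarith
      have hs0 : (p.2 : ℝ) = 0 := by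
        rcases (min_eq_iff.mp hz0') with ⟨h1, -⟩ | ⟨h1, -⟩
        · linarith
        · linarith
      rw [hW]
      simp only [hs0]
      norm_num
      exact ne_of_gt hrrpos
  have hZU : ∀ p : unitInterval × unitInterval, Z p.2 ∈ U := by
    intro p
    apply hball
    rw [Metric.mem_ball, dist_zero_right]
    calc ‖Z p.2‖ ≤ ρ / 2 := habsZ p.2
      _ < ρ := by linarith
  -- the family of loops in `f ⁻¹' U`
  set H : unitInterval × unitInterval → (exampleF ⁻¹' U : Set ExampleX) := fun p =>
    ⟨⟨(Z p.2, W p), hXmem p⟩, hZU p⟩ with hH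
  have hHc : Continuous H := by
    apply Continuous.subtype_mk
    apply Continuous.subtype_mk
    apply Continuous.prodMk
    · rw [hZ]; fun_prop
    · rw [hW]; fun_prop
  -- the transported family of loops in the fiber over `0`
  set L : unitInterval × unitInterval → ℂ := fun p =>
    ((h.symm (⟨0, hU0⟩, (h (H p)).2) : ExampleX) : ℂ × ℂ).2 with hL
  have hsymmfst : ∀ q : U × ({0}ᶜ : Set ℂ), ((h.symm q : ExampleX) : ℂ × ℂ).1 = (q.1 : ℂ) := by
    intro q
    have := hcomm (h.symm q)
    rw [h.apply_symm_apply] at this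
    exact this.symm
  have hLc : Continuous L := by
    have hq : Continuous fun p : unitInterval × unitInterval =>
        h.symm (⟨0, hU0⟩, (h (H p)).2) :=
      h.symm.continuous.comp
        (continuous_const.prodMk ((h.continuous.comp hHc).snd))
    exact continuous_snd.comp (continuous_subtype_val.comp
      (continuous_subtype_val.comp hq))
  have hne : ∀ p, L p ≠ 0 := by
    intro p hp0
    have h1 : ((h.symm (⟨0, hU0⟩, (h (H p)).2) : ExampleX) : ℂ × ℂ).1 = 0 :=
      hsymmfst _
    have h3 := (h.symm (⟨0, hU0⟩, (h (H p)).2) : ExampleX).2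
    apply h3
    have h2 : ((h.symm (⟨0, hU0⟩, (h (H p)).2) : ExampleX) : ℂ × ℂ)
        = ((0 : ℂ), (0 : ℂ)) := Prod.ext h1 hp0
    rw [h2]
    left; rfl
  have hloop : ∀ s, L (0, s) = L (1, s) := by
    intro s
    have hHeq : H (0, s) = H (1, s) := by
      apply Subtype.ext; apply Subtype.ext
      show ((Z s, W (0, s)) : ℂ × ℂ) = (Z s, W (1, s))
      have hWeq : W (0, s) = W (1, s) := by
        rw [hW]
        simp only []
        norm_num
      rw [hWeq]
    simp only [hL, hHeq]
  have hbase : ∀ t : unitInterval, L (t, 0)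
      = ((rr : ℝ) : ℂ) * Complex.exp (2 * (Real.pi : ℂ) * ((t : ℝ) : ℂ) * Complex.I) := by
    intro t
    have hfst : (h (H (t, 0))).1 = ⟨0, hU0⟩ := by
      apply Subtype.ext
      rw [hcomm]
      show Z ((0 : unitInterval)) = (0 : ℂ)
      rw [hZ]
      norm_num
    have hs : ((⟨0, hU0⟩, (h (H (t, 0))).2) : U × ({0}ᶜ : Set ℂ)) = h (H (t, 0)) :=
      Prod.ext hfst.symm rfl
    have : L (t, 0) = ((h.symm (h (H (t, 0))) : ExampleX) : ℂ × ℂ).2 := by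
      simp only [hL, hs]
    rw [this, h.symm_apply_apply]
    show W (t, 0) = _
    rw [hW]
    norm_num
  have htop : ∀ t, L (t, 1) = L (0, 1) := by
    intro t
    have hHeq : H (t, 1) = H (0, 1) := by
      apply Subtype.ext; apply Subtype.ext
      show ((Z 1, W (t, 1)) : ℂ × ℂ) = (Z 1, W (0, 1))
      have hW1 : ∀ t' : unitInterval, W (t', 1) = 0 := by
        intro t'
        rw [hW]
        norm_num
      rw [hW1 t, hW1 0]
    simp only [hL, hHeq]
  exact no_winding rr hrrpos L hLc hne hloop hbase htop

end
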